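/- For every connected graph G, every connecting transition set T of G has size at least (2/3)·τ(G), where τ(G) is the sum, over all co-connected components C of G with |C| ≥ 2, of (|C| − 2) if the subgraph of G induced by C is connected, and of (|C| − 1) otherwise. Combined with the existence of a connecting transition set of size τ(G), this yields a 3/2-approximation for the minimum connecting transition set problem. -/

import Mathlib

variable {V : Type*}

/-- The transition consisting of the edges `ab` and `bc`, written `abc`. -/
def transitionOf (a b c : V) : Sym2 (Sym2 V) := s(s(a, b), s(b, c))

/-- `t` is a transition of `G`: an unordered pair of two distinct adjacent edges. -/
def SimpleGraph.IsTransition (G : SimpleGraph V) (t : Sym2 (Sym2 V)) : Prop :=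
  ∃ a b c, G.Adj a b ∧ G.Adj b c ∧ a ≠ c ∧ t = transitionOf a b c

/-- A list of vertices (the support of a walk) is `T`-compatible: every pair of
consecutive edges is either a transition of `T` or a backtrack. -/
def TCompatible (T : Set (Sym2 (Sym2 V))) (l : List V) : Prop :=
  ∀ (i : ℕ) (h : i + 2 < l.length),
    l[i]'(by omega) = l[i + 2]'h ∨
    transitionOf (l[i]'(by omega)) (l[i + 1]'(by omega)) (l[i + 2]'h) ∈ T

/-- `G` is `T`-connected: every two vertices are joined by a `T`-compatible walk. -/
def SimpleGraph.TConnected (G : SimpleGraph V) (T : Set (Sym2 (Sym2 V))) : Prop :=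
  ∀ u v : V, ∃ p : G.Walk u v, TCompatible T p.support

/-- `T` is a connecting transition set of `G`. -/
def SimpleGraph.ConnectingTransitionSet (G : SimpleGraph V)
    (T : Finset (Sym2 (Sym2 V))) : Prop :=
  (∀ t ∈ T, G.IsTransition t) ∧ G.TConnected ↑T

/-- `H` is a connecting hypergraph of `G`: every hyperedge has at least two vertices and
induces a connected subgraph, and every pair of distinct non-adjacent vertices is
contained in a common hyperedge. -/
def SimpleGraph.ConnectingHypergraph (G : SimpleGraph V) (H : Finset (Finset V)) : Prop :=
  (∀ E ∈ H, 2 ≤ E.card ∧ (G.induce (E : Set V)).Connected) ∧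
  ∀ u v : V, u ≠ v → ¬G.Adj u v → ∃ E ∈ H, u ∈ E ∧ v ∈ E

/-- The cost of a hypergraph: the sum over hyperedges of (size − 2). -/
def hcost (H : Finset (Finset V)) : ℕ := ∑ E ∈ H, (E.card - 2)

/-- The quantity τ(G): the sum over co-connected components `C` of `G` with `|C| ≥ 2`
of `|C| − 2` if `G[C]` is connected and `|C| − 1` otherwise. -/
noncomputable def tau {V : Type*} [Fintype V] (G : SimpleGraph V) : ℕ := by
  classical
  haveI : Fintype Gᶜ.ConnectedComponent := Fintype.ofFinite _
  exact ∑ C : Gᶜ.ConnectedComponent,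
    if 2 ≤ C.supp.ncard then
      (if (G.induce C.supp).Connected then C.supp.ncard - 2 else C.supp.ncard - 1)
    else 0

set_option linter.unusedSectionVars false

section MCTSLower

open Finset

def LGraph (T : Finset (Sym2 (Sym2 V))) : SimpleGraph {t // t ∈ T} where
  Adj t t' := t ≠ t' ∧ ∃ e : Sym2 V, e ∈ (t : Sym2 (Sym2 V)) ∧ e ∈ (t' : Sym2 (Sym2 V))
  symm := ⟨by rintro t t' ⟨h, e, he, he'⟩; exact ⟨Ne.symm h, e, he', he⟩⟩
  loopless := ⟨fun t h => h.1 rfl⟩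

variable [Fintype V] [DecidableEq V]

open Classical in
noncomputable def Vset (T : Finset (Sym2 (Sym2 V))) (c : (LGraph T).ConnectedComponent) :
    Finset V :=
  univ.filter fun x => ∃ t : {t // t ∈ T}, (LGraph T).connectedComponentMk t = c ∧
    ∃ e ∈ (t : Sym2 (Sym2 V)), x ∈ e

lemma mem_Vset {T : Finset (Sym2 (Sym2 V))} {c : (LGraph T).ConnectedComponent} {x : V} :
    x ∈ Vset T c ↔ ∃ t : {t // t ∈ T}, (LGraph T).connectedComponentMk t = c ∧
      ∃ e ∈ (t : Sym2 (Sym2 V)), x ∈ e := by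
  simp [Vset]

lemma mem_transitionOf_iff {a b c : V} {e : Sym2 V} :
    e ∈ transitionOf a b c ↔ e = s(a, b) ∨ e = s(b, c) := by
  simp [transitionOf]

lemma vert_transitionOf_iff {a b c x : V} :
    (∃ e ∈ transitionOf a b c, x ∈ e) ↔ x = a ∨ x = b ∨ x = c := by
  simp only [transitionOf, Sym2.mem_iff]
  constructor
  · rintro ⟨e, (rfl | rfl), hx⟩ <;> simp only [Sym2.mem_iff] at hx <;> tauto
  · rintro (rfl | rfl | rfl)
    · exact ⟨s(x, b), Or.inl rfl, by simp⟩
    · exact ⟨s(a, x), Or.inl rfl, by simp⟩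
    · exact ⟨s(b, x), Or.inr rfl, by simp⟩

lemma TCompatible.tail {T : Set (Sym2 (Sym2 V))} {a : V} {l : List V}
    (h : TCompatible T (a :: l)) : TCompatible T l := by
  intro i hi
  have := h (i + 1) (by simp only [List.length_cons]; omega)
  simpa using this

lemma walk_confined {G : SimpleGraph V} {T : Finset (Sym2 (Sym2 V))} :
    ∀ (rest : List V) (a b : V), List.Chain' G.Adj (a :: b :: rest) →
    TCompatible (↑T) (a :: b :: rest) →
    (∀ x ∈ a :: b :: rest, x = a ∨ x = b) ∨
    ∃ c : (LGraph T).ConnectedComponent,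
      (∃ t : {t // t ∈ T}, (LGraph T).connectedComponentMk t = c ∧
        s(a, b) ∈ (t : Sym2 (Sym2 V))) ∧
      ∀ x ∈ a :: b :: rest, x ∈ Vset T c := by
  intro rest
  induction rest with
  | nil => intro a b _ _; exact Or.inl (by simp)
  | cons c₀ rest' IH =>
    intro a b hch hcomp
    have hch' : List.Chain' G.Adj (b :: c₀ :: rest') := hch.tail
    have hcomp' : TCompatible (↑T) (b :: c₀ :: rest') := hcomp.tail
    have h00 := hcomp 0 (by simp only [List.length_cons]; omega)
    simp only [List.getElem_cons_zero, List.getElem_cons_succ] at h00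
    rcases h00 with hac | ht₀
    · -- backtrack : a = c₀
      rcases IH b c₀ hch' hcomp' with hL | ⟨c, ⟨t, htc, hte⟩, hall⟩
      · refine Or.inl ?_
        intro x hx
        rcases List.mem_cons.mp hx with rfl | hx'
        · exact Or.inl rfl
        · rcases hL x hx' with rfl | rfl
          · exact Or.inr rfl
          · exact Or.inl hac.symm
      · refine Or.inr ⟨c, ⟨t, htc, ?_⟩, ?_⟩
        · have : s(a, b) = s(b, c₀) := by rw [Sym2.eq_swap, hac]
          rwa [this]
        · intro x hx
          rcases List.mem_cons.mp hx with rfl | hx'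
          · subst hac
            exact hall x (by simp)
          · exact hall x hx'
    · -- transition in T
      have htT : transitionOf a b c₀ ∈ T := ht₀
      set tt : {t // t ∈ T} := ⟨transitionOf a b c₀, htT⟩ with htt
      have habmem : s(a, b) ∈ (tt : Sym2 (Sym2 V)) := mem_transitionOf_iff.mpr (Or.inl rfl)
      have hbcmem : s(b, c₀) ∈ (tt : Sym2 (Sym2 V)) := mem_transitionOf_iff.mpr (Or.inr rfl)
      rcases IH b c₀ hch' hcomp' with hL | ⟨c, ⟨t, htc, hte⟩, hall⟩
      · refine Or.inr ⟨(LGraph T).connectedComponentMk tt, ⟨tt, rfl, habmem⟩, ?_⟩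
        intro x hx
        rcases List.mem_cons.mp hx with rfl | hx'
        · exact mem_Vset.mpr ⟨tt, rfl, s(x, b), habmem, by simp⟩
        · rcases hL x hx' with rfl | rfl
          · exact mem_Vset.mpr ⟨tt, rfl, s(x, c₀), hbcmem, by simp⟩
          · exact mem_Vset.mpr ⟨tt, rfl, s(b, x), hbcmem, by simp⟩
      · have hcc : (LGraph T).connectedComponentMk tt = c := by
          by_cases hEq : tt = t
          · rw [hEq]; exact htc
          · have hadj : (LGraph T).Adj tt t :=
              (⟨hEq, s(b, c₀), hbcmem, hte⟩ :
                tt ≠ t ∧ ∃ e : Sym2 V, e ∈ (tt : Sym2 (Sym2 V)) ∧ e ∈ (t : Sym2 (Sym2 V)))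
            have := SimpleGraph.ConnectedComponent.sound hadj.reachable
            rw [this]; exact htc
        refine Or.inr ⟨c, ⟨tt, hcc, habmem⟩, ?_⟩
        intro x hx
        rcases List.mem_cons.mp hx with rfl | hx'
        · exact mem_Vset.mpr ⟨tt, hcc, s(x, b), habmem, by simp⟩
        · exact hall x hx'

end MCTSLower

section More
variable [Fintype V] [DecidableEq V]

lemma nonadj_covered {G : SimpleGraph V} {T : Finset (Sym2 (Sym2 V))}
    (hT : G.ConnectingTransitionSet T) {u v : V} (hne : u ≠ v) (hnadj : ¬G.Adj u v) :
    ∃ c : (LGraph T).ConnectedComponent, u ∈ Vset T c ∧ v ∈ Vset T c := by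
  obtain ⟨p, hp⟩ := hT.2 u v
  cases p with
  | nil => exact absurd rfl hne
  | cons h q =>
    rename_i w
    have hsup : (SimpleGraph.Walk.cons h q).support = u :: w :: q.support.tail := by
      rw [SimpleGraph.Walk.support_cons]
      exact congrArg (u :: ·) q.support_eq_cons
    have hch := (SimpleGraph.Walk.cons h q).isChain_adj_support
    rw [hsup] at hch hp
    have hv : v ∈ u :: w :: q.support.tail := by
      rw [← hsup]; exact SimpleGraph.Walk.end_mem_support _
    rcases walk_confined _ u w hch hp with hL | ⟨c, _, hall⟩
    · rcases hL v hv with rfl | rfl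
      · exact absurd rfl hne
      · exact absurd h hnadj
    · exact ⟨c, hall u (by simp), hall v hv⟩

end More

section Span
open Finset
variable [Fintype V] [DecidableEq V]

open Classical in
noncomputable def Fc (T : Finset (Sym2 (Sym2 V))) (c : (LGraph T).ConnectedComponent) :
    Finset {t // t ∈ T} :=
  univ.filter fun t => (LGraph T).connectedComponentMk t = c

open Classical in
lemma card_verts_le {G : SimpleGraph V} {t : Sym2 (Sym2 V)} (ht : G.IsTransition t) :
    (univ.filter fun x : V => ∃ e ∈ t, x ∈ e).card ≤ 3 := by
  obtain ⟨a, b, c, _, _, _, rfl⟩ := ht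
  have hsub : (univ.filter fun x : V => ∃ e ∈ transitionOf a b c, x ∈ e) ⊆ {a, b, c} := by
    intro x hx
    simp only [Finset.mem_filter, Finset.mem_univ, true_and] at hx
    rcases vert_transitionOf_iff.mp hx with rfl | rfl | rfl <;> simp
  refine (Finset.card_le_card hsub).trans ?_
  calc ({a, b, c} : Finset V).card ≤ ({b, c} : Finset V).card + 1 := Finset.card_insert_le _ _
    _ ≤ 3 := by
        have := Finset.card_insert_le b ({c} : Finset V)
        simp only [Finset.card_singleton] at this
        omega

open Classical in
lemma card_verts_diff_le {G : SimpleGraph V} {t : Sym2 (Sym2 V)} (ht : G.IsTransition t)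
    {e : Sym2 V} (he : e ∈ t) :
    (univ.filter fun x : V => (∃ f ∈ t, x ∈ f) ∧ x ∉ e).card ≤ 1 := by
  obtain ⟨a, b, c, _, _, _, rfl⟩ := ht
  rcases mem_transitionOf_iff.mp he with rfl | rfl
  · have hsub : (univ.filter fun x : V => (∃ f ∈ transitionOf a b c, x ∈ f) ∧ x ∉ s(a, b))
        ⊆ {c} := by
      intro x hx
      simp only [Finset.mem_filter, Finset.mem_univ, true_and, Sym2.mem_iff] at hx
      obtain ⟨hv, hne⟩ := hx
      rcases vert_transitionOf_iff.mp hv with rfl | rfl | rfl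
      · exact absurd (Or.inl rfl) hne
      · exact absurd (Or.inr rfl) hne
      · simp
    simpa using Finset.card_le_card hsub
  · have hsub : (univ.filter fun x : V => (∃ f ∈ transitionOf a b c, x ∈ f) ∧ x ∉ s(b, c))
        ⊆ {a} := by
      intro x hx
      simp only [Finset.mem_filter, Finset.mem_univ, true_and, Sym2.mem_iff] at hx
      obtain ⟨hv, hne⟩ := hx
      rcases vert_transitionOf_iff.mp hv with rfl | rfl | rfl
      · simp
      · exact absurd (Or.inl rfl) hne
      · exact absurd (Or.inr rfl) hne
    simpa using Finset.card_le_card hsub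

end Span

lemma exists_parent {α : Type*} {Γ : SimpleGraph α} {a v : α} (h : Γ.Reachable a v)
    (hne : v ≠ a) : ∃ u, Γ.Adj u v ∧ Γ.dist a u < Γ.dist a v := by
  obtain ⟨p, hp⟩ := h.exists_walk_length_eq_dist
  cases hr : p.reverse with
  | nil => exact absurd rfl hne
  | cons h' q =>
    rename_i u
    refine ⟨u, h'.symm, ?_⟩
    have h1 : Γ.dist a u ≤ q.reverse.length := SimpleGraph.dist_le _
    have h2 : q.reverse.length = q.length := SimpleGraph.Walk.length_reverse _
    have h3 : p.reverse.length = p.length := SimpleGraph.Walk.length_reverse _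
    rw [hr] at h3
    simp only [SimpleGraph.Walk.length_cons] at h3
    omega

section Span2
open Finset
variable [Fintype V] [DecidableEq V]

lemma span_le {G : SimpleGraph V} {T : Finset (Sym2 (Sym2 V))}
    (hT1 : ∀ t ∈ T, G.IsTransition t) (c : (LGraph T).ConnectedComponent) :
    (Vset T c).card ≤ (Fc T c).card + 2 := by
  classical
  obtain ⟨t₀, ht₀⟩ : ∃ t₀ : {t // t ∈ T}, (LGraph T).connectedComponentMk t₀ = c :=
    Quot.exists_rep c
  have ht₀F : t₀ ∈ Fc T c := by simp [Fc, ht₀]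
  have hex : ∀ x : V, ∃ t : {t // t ∈ T}, x ∈ Vset T c →
      ((LGraph T).connectedComponentMk t = c ∧ (∃ e ∈ (t : Sym2 (Sym2 V)), x ∈ e) ∧
       ∀ t' : {t // t ∈ T}, (LGraph T).connectedComponentMk t' = c →
         (∃ e ∈ (t' : Sym2 (Sym2 V)), x ∈ e) →
         (LGraph T).dist t₀ t ≤ (LGraph T).dist t₀ t') := by
    intro x
    by_cases hx : x ∈ Vset T c
    · obtain ⟨t, htc, hte⟩ := mem_Vset.mp hx
      obtain ⟨tm, htm, hmin⟩ := Finset.exists_min_image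
        ((Fc T c).filter fun t : {t // t ∈ T} => ∃ e ∈ t.1, x ∈ e)
        (fun t => (LGraph T).dist t₀ t)
        ⟨t, by simp only [Finset.mem_filter, Fc, Finset.mem_univ, true_and]; exact ⟨htc, hte⟩⟩
      simp only [Finset.mem_filter, Fc, Finset.mem_univ, true_and] at htm
      refine ⟨tm, fun _ => ⟨htm.1, htm.2, ?_⟩⟩
      intro t' ht'c ht'e
      refine hmin t' ?_
      simp only [Finset.mem_filter, Fc, Finset.mem_univ, true_and]
      exact ⟨ht'c, ht'e⟩
    · exact ⟨t₀, fun h => absurd h hx⟩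
  choose φ hφ using hex
  have hmap : ∀ x ∈ Vset T c, φ x ∈ Fc T c := by
    intro x hx
    simp only [Fc, Finset.mem_filter, Finset.mem_univ, true_and]
    exact (hφ x hx).1
  have hcard := Finset.card_eq_sum_card_fiberwise hmap
  have hfib : ∀ t ∈ Fc T c,
      ((Vset T c).filter fun x => φ x = t).card ≤ if t = t₀ then 3 else 1 := by
    intro t htF
    simp only [Fc, Finset.mem_filter, Finset.mem_univ, true_and] at htF
    by_cases heq : t = t₀
    · subst heq
      simp only [if_pos rfl]
      refine le_trans (Finset.card_le_card ?_) (card_verts_le (hT1 t.1 t.2))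
      intro x hx
      simp only [Finset.mem_filter, Finset.mem_univ, true_and] at hx ⊢
      obtain ⟨hxV, hxφ⟩ := hx
      have := (hφ x hxV).2.1
      rwa [hxφ] at this
    · simp only [if_neg heq]
      have hreach : (LGraph T).Reachable t₀ t := by
        apply SimpleGraph.ConnectedComponent.exact
        rw [ht₀, htF]
      obtain ⟨u, hadj, hdu⟩ := exists_parent hreach heq
      have hmku : (LGraph T).connectedComponentMk u = c :=
        (SimpleGraph.ConnectedComponent.sound hadj.reachable).trans htF
      obtain ⟨hne', e, heu, het⟩ :=
        (hadj : u ≠ t ∧ ∃ e : Sym2 V, e ∈ (u : Sym2 (Sym2 V)) ∧ e ∈ (t : Sym2 (Sym2 V)))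
      refine le_trans (Finset.card_le_card ?_) (card_verts_diff_le (hT1 t.1 t.2) het)
      intro x hx
      simp only [Finset.mem_filter, Finset.mem_univ, true_and] at hx ⊢
      obtain ⟨hxV, hxφ⟩ := hx
      have h1 := (hφ x hxV).2.1
      rw [hxφ] at h1
      refine ⟨h1, fun hxe => ?_⟩
      have := (hφ x hxV).2.2 u hmku ⟨e, heu, hxe⟩
      rw [hxφ] at this
      omega
  calc (Vset T c).card = ∑ t ∈ Fc T c, ((Vset T c).filter fun x => φ x = t).card := hcard
    _ ≤ ∑ t ∈ Fc T c, if t = t₀ then 3 else 1 := Finset.sum_le_sum hfib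
    _ = ∑ t ∈ Fc T c, ((if t = t₀ then 2 else 0) + 1) := by
        apply Finset.sum_congr rfl; intro t _; split_ifs <;> rfl
    _ = (if t₀ ∈ Fc T c then 2 else 0) + (Fc T c).card := by
        rw [Finset.sum_add_distrib, Finset.sum_ite_eq' (Fc T c) t₀ (fun _ => 2)]
        simp
    _ = (Fc T c).card + 2 := by rw [if_pos ht₀F]; omega

end Span2

section Cover
open Finset
variable [Fintype V] [DecidableEq V]

open Classical in
noncomputable def Sbig (G : SimpleGraph V) (T : Finset (Sym2 (Sym2 V)))
    (c : (LGraph T).ConnectedComponent) : Finset V :=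
  (Vset T c).filter fun v => ∃ u ∈ Vset T c, Gᶜ.Adj u v

open Classical in
noncomputable def SCC (G : SimpleGraph V) (T : Finset (Sym2 (Sym2 V)))
    (c : (LGraph T).ConnectedComponent) (C : Gᶜ.ConnectedComponent) : Finset V :=
  (Sbig G T c).filter fun v => Gᶜ.connectedComponentMk v = C

open Classical in
noncomputable def CF (G : SimpleGraph V) (C : Gᶜ.ConnectedComponent) : Finset V :=
  univ.filter fun v => Gᶜ.connectedComponentMk v = C

lemma cover_le {G : SimpleGraph V} {T : Finset (Sym2 (Sym2 V))}
    (hT : G.ConnectingTransitionSet T) [Fintype (LGraph T).ConnectedComponent]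
    (C : Gᶜ.ConnectedComponent) :
    (CF G C).card - 1 ≤ ∑ c : (LGraph T).ConnectedComponent, ((SCC G T c C).card - 1) := by
  classical
  by_cases hcc : (CF G C).card ≤ 1
  · have : (CF G C).card - 1 = 0 := by omega
    rw [this]; exact Nat.zero_le _
  push_neg at hcc
  obtain ⟨v₀, hv₀⟩ : ∃ v₀, Gᶜ.connectedComponentMk v₀ = C := Quot.exists_rep C
  have hv₀CF : v₀ ∈ CF G C := by simp [CF, hv₀]
  set CF' := (CF G C).erase v₀ with hCF'def
  have hCF' : CF'.card = (CF G C).card - 1 := Finset.card_erase_of_mem hv₀CF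
  have hne : CF'.Nonempty := Finset.card_pos.mp (by omega)
  have key : ∀ v ∈ CF', ∃ c : (LGraph T).ConnectedComponent,
      v ∈ SCC G T c C ∧ ∃ u ∈ SCC G T c C, Gᶜ.dist v₀ u < Gᶜ.dist v₀ v := by
    intro v hv
    have hvne : v ≠ v₀ := Finset.ne_of_mem_erase hv
    have hvC : Gᶜ.connectedComponentMk v = C := by
      have := Finset.mem_of_mem_erase hv
      simpa [CF] using this
    have hreach : Gᶜ.Reachable v₀ v :=
      SimpleGraph.ConnectedComponent.exact (hv₀.trans hvC.symm)
    obtain ⟨u, hadj, hdu⟩ := exists_parent hreach hvne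
    have huC : Gᶜ.connectedComponentMk u = C :=
      (SimpleGraph.ConnectedComponent.sound hadj.reachable).trans hvC
    have hcompl := (SimpleGraph.compl_adj G u v).mp hadj
    obtain ⟨c, huV, hvV⟩ := nonadj_covered hT hcompl.1 hcompl.2
    refine ⟨c, ?_, u, ?_, hdu⟩
    · simp only [SCC, Sbig, Finset.mem_filter]
      exact ⟨⟨hvV, u, huV, hadj⟩, hvC⟩
    · simp only [SCC, Sbig, Finset.mem_filter]
      exact ⟨⟨huV, v, hvV, hadj.symm⟩, huC⟩
  obtain ⟨vwit, hwit⟩ := hne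
  obtain ⟨cwit, _⟩ := key vwit hwit
  have hex : ∀ v : V, ∃ c : (LGraph T).ConnectedComponent, v ∈ CF' →
      v ∈ SCC G T c C ∧ ∃ u ∈ SCC G T c C, Gᶜ.dist v₀ u < Gᶜ.dist v₀ v := by
    intro v
    by_cases hv : v ∈ CF'
    · obtain ⟨c, h1, h2⟩ := key v hv
      exact ⟨c, fun _ => ⟨h1, h2⟩⟩
    · exact ⟨cwit, fun h => absurd h hv⟩
  choose ψ hψ using hex
  have hcard := Finset.card_eq_sum_card_fiberwise
    (f := ψ) (s := CF') (t := Finset.univ) (fun x _ => Finset.mem_univ _)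
  have hfib : ∀ c : (LGraph T).ConnectedComponent,
      (CF'.filter fun v => ψ v = c).card ≤ (SCC G T c C).card - 1 := by
    intro c
    by_cases hfe : (CF'.filter fun v => ψ v = c).Nonempty
    · obtain ⟨w, hw⟩ := hfe
      simp only [Finset.mem_filter] at hw
      have hSne : (SCC G T c C).Nonempty := by
        refine ⟨w, ?_⟩
        have := (hψ w hw.1).1
        rwa [hw.2] at this
      obtain ⟨m, hmS, hmmin⟩ := Finset.exists_min_image (SCC G T c C)
        (fun w => Gᶜ.dist v₀ w) hSne
      have hsub : (CF'.filter fun v => ψ v = c) ⊆ (SCC G T c C).erase m := by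
        intro v hv
        simp only [Finset.mem_filter] at hv
        have h1 := (hψ v hv.1).1
        obtain ⟨u, huS, hud⟩ := (hψ v hv.1).2
        rw [hv.2] at h1 huS
        refine Finset.mem_erase.mpr ⟨?_, h1⟩
        rintro rfl
        exact absurd (hmmin u huS) (by omega)
      refine (Finset.card_le_card hsub).trans ?_
      rw [Finset.card_erase_of_mem hmS]
    · rw [Finset.not_nonempty_iff_eq_empty.mp hfe]
      simp
  calc (CF G C).card - 1 = CF'.card := hCF'.symm
    _ = ∑ c : (LGraph T).ConnectedComponent, (CF'.filter fun v => ψ v = c).card := hcard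
    _ ≤ ∑ c : (LGraph T).ConnectedComponent, ((SCC G T c C).card - 1) :=
        Finset.sum_le_sum fun c _ => hfib c

end Cover

section PerC
open Finset
variable [Fintype V] [DecidableEq V]

lemma per_c {G : SimpleGraph V} {T : Finset (Sym2 (Sym2 V))}
    (hT1 : ∀ t ∈ T, G.IsTransition t) [Fintype Gᶜ.ConnectedComponent]
    (c : (LGraph T).ConnectedComponent) :
    2 * ∑ C : Gᶜ.ConnectedComponent, ((SCC G T c C).card - 1) ≤ 3 * (Fc T c).card := by
  classical
  obtain ⟨t₀, ht₀⟩ : ∃ t₀ : {t // t ∈ T}, (LGraph T).connectedComponentMk t₀ = c :=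
    Quot.exists_rep c
  have ht₀F : t₀ ∈ Fc T c := by simp [Fc, ht₀]
  have hk1 : 1 ≤ (Fc T c).card := Finset.card_pos.mpr ⟨t₀, ht₀F⟩
  set σ := ∑ C : Gᶜ.ConnectedComponent, ((SCC G T c C).card - 1) with hσdef
  have hSb : ∑ C : Gᶜ.ConnectedComponent, (SCC G T c C).card = (Sbig G T c).card := by
    have h := Finset.card_eq_sum_card_fiberwise
      (f := fun v => Gᶜ.connectedComponentMk v) (s := Sbig G T c) (t := Finset.univ)
      (fun x _ => Finset.mem_univ _)
    rw [h]
    refine Finset.sum_congr rfl fun C _ => ?_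
    have hEq : ((Sbig G T c).filter fun v => Gᶜ.connectedComponentMk v = C) = SCC G T c C := by
      ext v; simp [SCC]
    rw [hEq]
  have hsbV : (Sbig G T c).card ≤ (Vset T c).card :=
    Finset.card_le_card (Finset.filter_subset _ _)
  have hspan := span_le hT1 c
  by_cases hσ0 : σ = 0
  · omega
  obtain ⟨C₀, _, hC₀⟩ := Finset.exists_ne_zero_of_sum_ne_zero hσ0
  have hσle : σ + 1 ≤ (Sbig G T c).card := by
    rw [← hSb]
    have h1 : σ = ((SCC G T c C₀).card - 1) +
        ∑ C ∈ Finset.univ.erase C₀, ((SCC G T c C).card - 1) :=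
      (Finset.add_sum_erase _ _ (Finset.mem_univ C₀)).symm
    have h2 : ∑ C : Gᶜ.ConnectedComponent, (SCC G T c C).card = (SCC G T c C₀).card +
        ∑ C ∈ Finset.univ.erase C₀, (SCC G T c C).card :=
      (Finset.add_sum_erase _ _ (Finset.mem_univ C₀)).symm
    have h3 : ∑ C ∈ Finset.univ.erase C₀, ((SCC G T c C).card - 1) ≤
        ∑ C ∈ Finset.univ.erase C₀, (SCC G T c C).card :=
      Finset.sum_le_sum fun _ _ => Nat.sub_le _ _
    omega
  by_cases hk : (Fc T c).card = 1
  · obtain ⟨a, b, c₀, hab, hbc, hac, ht⟩ := hT1 t₀.1 t₀.2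
    have huniq : ∀ t : {t // t ∈ T}, (LGraph T).connectedComponentMk t = c → t = t₀ := by
      intro t htc
      have htF : t ∈ Fc T c := by simp [Fc, htc]
      obtain ⟨x, hx⟩ := Finset.card_eq_one.mp hk
      rw [hx] at htF ht₀F
      simp only [Finset.mem_singleton] at htF ht₀F
      rw [htF, ht₀F]
    have hVsub : Vset T c ⊆ {a, b, c₀} := by
      intro x hx
      obtain ⟨t, htc, hte⟩ := mem_Vset.mp hx
      rw [huniq t htc, ht] at hte
      rcases vert_transitionOf_iff.mp hte with rfl | rfl | rfl <;> simp
    have hSbig2 : Sbig G T c ⊆ {a, c₀} := by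
      intro v hv
      simp only [Sbig, Finset.mem_filter] at hv
      obtain ⟨hvV, u, huV, hadj⟩ := hv
      have hcompl := (SimpleGraph.compl_adj G u v).mp hadj
      have hu3 := hVsub huV
      have hv3 := hVsub hvV
      simp only [Finset.mem_insert, Finset.mem_singleton] at hu3 hv3 ⊢
      rcases hv3 with rfl | rfl | rfl
      · exact Or.inl rfl
      · exfalso
        rcases hu3 with rfl | rfl | rfl
        · exact hcompl.2 hab
        · exact hcompl.1 rfl
        · exact hcompl.2 hbc.symm
      · exact Or.inr rfl
    have hSb2 : (Sbig G T c).card ≤ 2 := by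
      refine (Finset.card_le_card hSbig2).trans ?_
      exact (Finset.card_insert_le _ _).trans (by simp)
    omega
  · omega

end PerC

set_option maxHeartbeats 2000000 in
theorem _dummy : True := trivial

open Classical in
lemma tau_eq {V : Type*} [Fintype V] (G : SimpleGraph V) [Fintype Gᶜ.ConnectedComponent] :
    tau G = ∑ C : Gᶜ.ConnectedComponent,
      (if 2 ≤ C.supp.ncard then
        (if (G.induce C.supp).Connected then C.supp.ncard - 2 else C.supp.ncard - 1)
      else 0) := by
  unfold tau
  congr 1
  · congr 1
    exact Subsingleton.elim _ _

lemma tau_le_sum {V : Type*} [Fintype V] [DecidableEq V] (G : SimpleGraph V)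
    [Fintype Gᶜ.ConnectedComponent] :
    tau G ≤ ∑ C : Gᶜ.ConnectedComponent, ((CF G C).card - 1) := by
  rw [tau_eq G]
  refine Finset.sum_le_sum fun C _ => ?_
  have hncard : C.supp.ncard = (CF G C).card := by
    have hsupp : C.supp = ↑(CF G C) := by
      ext v
      simp [CF, SimpleGraph.ConnectedComponent.mem_supp_iff]
    rw [hsupp, Set.ncard_coe_finset]
  rw [hncard]
  split_ifs <;> omega

section Final
open Finset
variable [Fintype V] [DecidableEq V]

set_option maxHeartbeats 2000000 in
/-- For every connected graph `G`, every connecting transition set of `G` has size at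
least `(2/3)·τ(G)`. -/
theorem stmt15 {V : Type*} [Fintype V] [DecidableEq V] (G : SimpleGraph V)
    (hc : G.Connected) (T : Finset (Sym2 (Sym2 V)))
    (hT : G.ConnectingTransitionSet T) :
    2 * tau G ≤ 3 * T.card := by
  classical
  haveI : Fintype Gᶜ.ConnectedComponent := Fintype.ofFinite _
  haveI : Fintype (LGraph T).ConnectedComponent := Fintype.ofFinite _
  have htau : tau G ≤ ∑ C : Gᶜ.ConnectedComponent, ((CF G C).card - 1) := tau_le_sum G
  have h3 : tau G ≤ ∑ C : Gᶜ.ConnectedComponent,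
      ∑ c : (LGraph T).ConnectedComponent, ((SCC G T c C).card - 1) :=
    htau.trans (Finset.sum_le_sum fun C _ => cover_le hT C)
  have h4 : 2 * tau G ≤ ∑ c : (LGraph T).ConnectedComponent,
      2 * ∑ C : Gᶜ.ConnectedComponent, ((SCC G T c C).card - 1) := by
    calc 2 * tau G ≤ 2 * ∑ C : Gᶜ.ConnectedComponent,
        ∑ c : (LGraph T).ConnectedComponent, ((SCC G T c C).card - 1) :=
          Nat.mul_le_mul_left _ h3
      _ = 2 * ∑ c : (LGraph T).ConnectedComponent,
          ∑ C : Gᶜ.ConnectedComponent, ((SCC G T c C).card - 1) := by rw [Finset.sum_comm]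
      _ = ∑ c : (LGraph T).ConnectedComponent,
          2 * ∑ C : Gᶜ.ConnectedComponent, ((SCC G T c C).card - 1) := Finset.mul_sum _ _ _
  have h6 : ∑ c : (LGraph T).ConnectedComponent, (Fc T c).card = T.card := by
    have h := Finset.card_eq_sum_card_fiberwise
      (f := fun t : {t // t ∈ T} => (LGraph T).connectedComponentMk t)
      (s := Finset.univ) (t := Finset.univ) (fun _ _ => Finset.mem_univ _)
    rw [Finset.card_univ, Fintype.card_coe] at h
    rw [h]
    refine Finset.sum_congr rfl fun c _ => ?_
    congr 1 <;> try (ext t; simp [Fc])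
  calc 2 * tau G ≤ ∑ c : (LGraph T).ConnectedComponent,
      2 * ∑ C : Gᶜ.ConnectedComponent, ((SCC G T c C).card - 1) := h4
    _ ≤ ∑ c : (LGraph T).ConnectedComponent, 3 * (Fc T c).card :=
        Finset.sum_le_sum fun c _ => per_c hT.1 c
    _ = 3 * ∑ c : (LGraph T).ConnectedComponent, (Fc T c).card := (Finset.mul_sum _ _ _).symm
    _ = 3 * T.card := by rw [h6]

end Final
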